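/- For a measurable vector field s : ℝ^d → ℝ^d define the target-domain conditional score matching loss L_target(s) := ∫ qₜ(x) ‖s(x) − ∇ log qₜ(x)‖² dx and the importance-weighted denoising score matching loss on the source L_source(s) := ∫∫ p₀(x₀) k(x | x₀) (w(x₀)/W) ‖s(x) − ∇ₓ log k(x | x₀)‖² dx₀ dx. Assume: for every x₀ the map x ↦ k(x | x₀) is differentiable with k(x | x₀) > 0 for all x; for Lebesgue-a.e. x, qₜ(x) > 0, qₜ is differentiable at x, and ∇qₜ(x) = ∫ q₀(x₀) ∇ₓk(x | x₀) dx₀ (differentiation under the integral sign); C₁ := ∫ qₜ(x) ‖∇ log qₜ(x)‖² dx < ∞ and C₂ := ∫∫ q₀(x₀) k(x | x₀) ‖∇ₓ log k(x | x₀)‖² dx₀ dx < ∞. Then for every measurable s with ∫ qₜ(x) ‖s(x)‖² dx < ∞ one has L_target(s) − L_source(s) = C₁ − C₂. In particular the difference of the two objectives is a constant independent of s, so conditional score matching on the reweighted target domain and importance-weighted denoising score matching on the source domain have exactly the same minimizers. -/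

import Mathlib

open MeasureTheory Filter

noncomputable section

/-- `Vec d` is `ℝ^d`, equipped with Lebesgue measure. -/
abbrev Vec (d : ℕ) := EuclideanSpace ℝ (Fin d)

variable {d : ℕ}

/-- The normalizing constant `W = ∫ p₀(x₀) w(x₀) dx₀`. -/
def Wconst (p₀ w : Vec d → ℝ) : ℝ :=
  ∫ x₀, p₀ x₀ * w x₀

/-- The reweighted density `q₀(x₀) = p₀(x₀) w(x₀) / W`. -/
def q0 (p₀ w : Vec d → ℝ) (x₀ : Vec d) : ℝ :=
  p₀ x₀ * w x₀ / Wconst p₀ w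

/-- The reweighted noised marginal `qₜ(x) = ∫ k(x | x₀) q₀(x₀) dx₀`. -/
def qT (k : Vec d → Vec d → ℝ) (p₀ w : Vec d → ℝ) (x : Vec d) : ℝ :=
  ∫ x₀, k x x₀ * q0 p₀ w x₀

/-- `∇ₓ log k(x | x₀)`: the gradient of `y ↦ log k(y | x₀)` at `x`. -/
def gradLogK (k : Vec d → Vec d → ℝ) (x x₀ : Vec d) : Vec d :=
  gradient (fun y => Real.log (k y x₀)) x

/-- The score of the reweighted noised marginal, `∇ log qₜ(x)`. -/
def scoreQT (k : Vec d → Vec d → ℝ) (p₀ w : Vec d → ℝ) (x : Vec d) : Vec d :=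
  gradient (fun y => Real.log (qT k p₀ w y)) x

/-- Target-domain conditional score matching loss
`L_target(s) = ∫ qₜ(x) ‖s(x) − ∇ log qₜ(x)‖² dx`. -/
def Ltarget (k : Vec d → Vec d → ℝ) (p₀ w : Vec d → ℝ) (s : Vec d → Vec d) : ℝ :=
  ∫ x, qT k p₀ w x * ‖s x - scoreQT k p₀ w x‖ ^ 2

/-- Importance-weighted denoising score matching loss on the source,
`L_source(s) = ∫∫ p₀(x₀) k(x | x₀) (w(x₀)/W) ‖s(x) − ∇ₓ log k(x | x₀)‖² dx₀ dx`. -/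
def Lsource (k : Vec d → Vec d → ℝ) (p₀ w : Vec d → ℝ) (s : Vec d → Vec d) : ℝ :=
  ∫ x, ∫ x₀, p₀ x₀ * k x x₀ * (w x₀ / Wconst p₀ w) * ‖s x - gradLogK k x x₀‖ ^ 2

section Aux

open Topology

/-- Gradient of a logarithmic composition. -/
lemma gradient_log_comp (f : Vec d → ℝ) (x : Vec d) (hf : DifferentiableAt ℝ f x)
    (hx : f x ≠ 0) :
    gradient (fun y => Real.log (f y)) x = (f x)⁻¹ • gradient f x := by
  have h1 : HasFDerivAt (fun y => Real.log (f y)) ((f x)⁻¹ • fderiv ℝ f x) x := by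
    exact (Real.hasDerivAt_log hx).comp_hasFDerivAt x hf.hasFDerivAt
  rw [gradient, h1.fderiv, _root_.map_smul, ← gradient]

lemma inner_gradient_eq (f : Vec d → ℝ) (x v : Vec d) :
    @inner ℝ _ _ (gradient f x) v = fderiv ℝ f x v :=
  InnerProductSpace.toDual_symm_apply

lemma gradient_eq_sum (f : Vec d → ℝ) (x : Vec d) :
    gradient f x = ∑ i, (fderiv ℝ f x (EuclideanSpace.basisFun (Fin d) ℝ i))
      • (EuclideanSpace.basisFun (Fin d) ℝ i : Vec d) := by
  set b := EuclideanSpace.basisFun (Fin d) ℝ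
  have := b.sum_repr (gradient f x)
  rw [← this]
  congr 1
  ext i
  rw [b.repr_apply_apply, real_inner_comm, inner_gradient_eq]

lemma measurable_fderiv_param (k : Vec d → Vec d → ℝ)
    (hk : Measurable (Function.uncurry k))
    (hdiff : ∀ x₀, Differentiable ℝ (fun y => k y x₀)) (x v : Vec d) :
    Measurable (fun x₀ => fderiv ℝ (fun y => k y x₀) x v) := by
  set u : ℕ → ℝ := fun n => ((n : ℝ) + 1)⁻¹ with hu
  have hu0 : Tendsto u atTop (𝓝[≠] (0:ℝ)) := by
    rw [tendsto_nhdsWithin_iff]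
    constructor
    · exact tendsto_one_div_add_atTop_nhds_zero_nat.congr (fun n => by simp [hu, one_div])
    · refine Eventually.of_forall fun n => ?_
      simp only [Set.mem_compl_iff, Set.mem_singleton_iff, hu]
      positivity
  apply measurable_of_tendsto_metrizable
    (f := fun n x₀ => (u n)⁻¹ • (k (x + u n • v) x₀ - k (x + (0:ℝ) • v) x₀))
  · intro n
    have h1 : Measurable fun x₀ => k (x + u n • v) x₀ :=
      hk.comp (measurable_prodMk_left)
    have h2 : Measurable fun x₀ => k (x + (0:ℝ) • v) x₀ :=
      hk.comp (measurable_prodMk_left)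
    exact (measurable_const (a := (u n)⁻¹)).smul (h1.sub h2)
  · rw [tendsto_pi_nhds]
    intro x₀
    have hline : HasDerivAt (fun t : ℝ => x + t • v) v 0 := by
      simpa using ((hasDerivAt_id (0:ℝ)).smul_const v).const_add x
    have hF : HasFDerivAt (fun y => k y x₀) (fderiv ℝ (fun y => k y x₀) x) (x + (0:ℝ) • v) := by
      simpa using ((hdiff x₀) x).hasFDerivAt
    have hcomp : HasDerivAt (fun t : ℝ => k (x + t • v) x₀)
        (fderiv ℝ (fun y => k y x₀) x v) 0 := by
      have h := hF.comp_hasDerivAt 0 hline; exact h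
    have := (hasDerivAt_iff_tendsto_slope.mp hcomp).comp hu0
    refine this.congr fun n => ?_
    simp [slope_def_field, Function.comp, div_eq_inv_mul]

lemma measurable_gradient_param (k : Vec d → Vec d → ℝ)
    (hk : Measurable (Function.uncurry k))
    (hdiff : ∀ x₀, Differentiable ℝ (fun y => k y x₀)) (x : Vec d) :
    Measurable (fun x₀ => gradient (fun y => k y x₀) x) := by
  simp_rw [gradient_eq_sum]
  exact Finset.measurable_sum _ fun i _ =>
    (measurable_fderiv_param k hk hdiff x _).smul_const _

end Aux

/-- Conditional score matching on the reweighted target domain and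
importance-weighted denoising score matching on the source domain differ by a constant
independent of `s`, hence have the same minimizers. -/
theorem target_score_matching_eq_importance_weighted_dsm
    (d : ℕ) (hd : 1 ≤ d)
    -- `p₀` is a probability density
    (p₀ : Vec d → ℝ) (hp₀_meas : Measurable p₀) (hp₀_nonneg : ∀ x₀, 0 ≤ p₀ x₀)
    (hp₀_int : ∫ x₀, p₀ x₀ = 1)
    -- `k` is a forward kernel: nonnegative, measurable, and a density in its first argument
    (k : Vec d → Vec d → ℝ) (hk_meas : Measurable (Function.uncurry k))
    (hk_nonneg : ∀ y x₀, 0 ≤ k y x₀) (hk_dens : ∀ x₀, ∫ y, k y x₀ = 1)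
    -- weight `w ≥ 0` with `W` finite and positive
    (w : Vec d → ℝ) (hw_meas : Measurable w) (hw_nonneg : ∀ x₀, 0 ≤ w x₀)
    (hW_int : Integrable (fun x₀ => p₀ x₀ * w x₀))
    (hW_pos : 0 < Wconst p₀ w)
    -- the kernel is everywhere differentiable and positive in its first argument
    (hk_diff : ∀ x₀, Differentiable ℝ (fun y => k y x₀))
    (hk_pos : ∀ y x₀, 0 < k y x₀)
    -- a.e. positivity and differentiability (under the integral sign) of `qₜ`
    (hqt_ae : ∀ᵐ x, 0 < qT k p₀ w x ∧ DifferentiableAt ℝ (qT k p₀ w) x ∧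
      gradient (qT k p₀ w) x = ∫ x₀, q0 p₀ w x₀ • gradient (fun y => k y x₀) x)
    -- `C₁ < ∞`
    (hC₁ : Integrable fun x => qT k p₀ w x * ‖scoreQT k p₀ w x‖ ^ 2)
    -- `C₂ < ∞`
    (hC₂ : Integrable (Function.uncurry
      fun x x₀ => q0 p₀ w x₀ * k x x₀ * ‖gradLogK k x x₀‖ ^ 2)) :
    ∀ s : Vec d → Vec d, Measurable s →
      (Integrable fun x => qT k p₀ w x * ‖s x‖ ^ 2) →
      Ltarget k p₀ w s - Lsource k p₀ w s
        = (∫ x, qT k p₀ w x * ‖scoreQT k p₀ w x‖ ^ 2)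
          - ∫ x, ∫ x₀, q0 p₀ w x₀ * k x x₀ * ‖gradLogK k x x₀‖ ^ 2 := by
  intro s hs_meas hs_int
  -- basic facts about q0
  have hq0_nonneg : ∀ x₀, 0 ≤ q0 p₀ w x₀ := fun x₀ =>
    div_nonneg (mul_nonneg (hp₀_nonneg x₀) (hw_nonneg x₀)) hW_pos.le
  have hq0_meas : Measurable (q0 p₀ w) := (hp₀_meas.mul hw_meas).div_const _
  have hq0_int : Integrable (q0 p₀ w) := hW_int.div_const _
  have hq0_one : ∫ x₀, q0 p₀ w x₀ = 1 := by
    simp only [q0]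
    rw [integral_div]
    exact div_self hW_pos.ne'
  have hk_int : ∀ x₀, Integrable (fun y => k y x₀) := by
    intro x₀
    by_contra h
    have := hk_dens x₀
    rw [integral_undef h] at this
    norm_num at this
  have hkq_meas : Measurable (Function.uncurry fun x x₀ => k x x₀ * q0 p₀ w x₀) :=
    hk_meas.mul (hq0_meas.comp measurable_snd)
  -- product integrability of (x, x₀) ↦ k x x₀ * q0 x₀
  have Hkq : Integrable (Function.uncurry fun x x₀ => k x x₀ * q0 p₀ w x₀)
      (volume.prod volume) := by
    have huc : Function.uncurry (fun x x₀ => k x x₀ * q0 p₀ w x₀)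
        = fun z : Vec d × Vec d => k z.1 z.2 * q0 p₀ w z.2 := rfl
    rw [huc]
    refine ⟨(by rw [← huc]; exact hkq_meas.aestronglyMeasurable), ?_⟩
    rw [hasFiniteIntegral_iff_ofReal (Eventually.of_forall fun z =>
      mul_nonneg (hk_nonneg _ _) (hq0_nonneg _))]
    have hmeas : Measurable fun z : Vec d × Vec d =>
        ENNReal.ofReal (k z.1 z.2 * q0 p₀ w z.2) :=
      hkq_meas.ennreal_ofReal
    rw [lintegral_prod _ hmeas.aemeasurable]
    rw [lintegral_lintegral_swap (by exact hmeas.aemeasurable)]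
    have key : ∀ x₀, (∫⁻ x : Vec d, ENNReal.ofReal (k x x₀ * q0 p₀ w x₀))
        = ENNReal.ofReal (q0 p₀ w x₀) := by
      intro x₀
      have e1 : ∀ x : Vec d, ENNReal.ofReal (k x x₀ * q0 p₀ w x₀)
          = ENNReal.ofReal (k x x₀) * ENNReal.ofReal (q0 p₀ w x₀) := fun x =>
        ENNReal.ofReal_mul (hk_nonneg x x₀)
      simp_rw [e1]
      have hm : Measurable fun x : Vec d => ENNReal.ofReal (k x x₀) :=
        (hk_meas.comp measurable_prodMk_right).ennreal_ofReal
      rw [lintegral_mul_const _ hm,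
        ← ofReal_integral_eq_lintegral_ofReal (hk_int x₀)
          (Eventually.of_forall fun y => hk_nonneg y x₀), hk_dens x₀]
      simp
    simp_rw [key]
    rw [← ofReal_integral_eq_lintegral_ofReal hq0_int (Eventually.of_forall hq0_nonneg), hq0_one]
    simp
  -- basic facts about qT
  have hqT_nonneg : ∀ x, 0 ≤ qT k p₀ w x := fun x =>
    integral_nonneg fun x₀ => mul_nonneg (hk_nonneg _ _) (hq0_nonneg _)
  have hqT_meas : Measurable (qT k p₀ w) :=
    (hkq_meas.stronglyMeasurable.integral_prod_right').measurable
  have hscore_meas : Measurable (scoreQT k p₀ w) := by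
    have h1 : Measurable (fderiv ℝ (fun y => Real.log (qT k p₀ w y))) := measurable_fderiv ℝ _
    exact ((InnerProductSpace.toDual ℝ (Vec d)).symm.continuous.measurable).comp h1
  -- the pointwise identity ∇ₓ k = k ∇ₓ log k
  have hgradk : ∀ (x x₀ : Vec d), gradient (fun y => k y x₀) x = k x x₀ • gradLogK k x x₀ := by
    intro x x₀
    rw [gradLogK, gradient_log_comp _ _ ((hk_diff x₀) x) (hk_pos x x₀).ne', smul_smul,
      mul_inv_cancel₀ (hk_pos x x₀).ne', one_smul]
  -- cross term and its integrability
  have hB_meas : Measurable fun x => qT k p₀ w x * @inner ℝ _ _ (s x) (scoreQT k p₀ w x) :=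
    hqT_meas.mul (hs_meas.inner hscore_meas)
  have hB_int : Integrable fun x => qT k p₀ w x * @inner ℝ _ _ (s x) (scoreQT k p₀ w x) := by
    refine Integrable.mono' ((hs_int.add hC₁).div_const 2) hB_meas.aestronglyMeasurable
      (Eventually.of_forall fun x => ?_)
    have h1 : |@inner ℝ _ _ (s x) (scoreQT k p₀ w x)| ≤ ‖s x‖ * ‖scoreQT k p₀ w x‖ :=
      abs_real_inner_le_norm _ _
    have h2 : 0 ≤ qT k p₀ w x := hqT_nonneg x
    rw [Real.norm_eq_abs, abs_mul, abs_of_nonneg h2]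
    have h3 : ‖s x‖ * ‖scoreQT k p₀ w x‖ ≤ (‖s x‖^2 + ‖scoreQT k p₀ w x‖^2)/2 := by
      nlinarith [sq_nonneg (‖s x‖ - ‖scoreQT k p₀ w x‖)]
    calc qT k p₀ w x * |@inner ℝ _ _ (s x) (scoreQT k p₀ w x)|
        ≤ qT k p₀ w x * ((‖s x‖^2 + ‖scoreQT k p₀ w x‖^2)/2) :=
          mul_le_mul_of_nonneg_left (h1.trans h3) h2
      _ = (qT k p₀ w x * ‖s x‖^2 + qT k p₀ w x * ‖scoreQT k p₀ w x‖^2)/2 := by ring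
  -- expansion of Ltarget
  have hLt : Ltarget k p₀ w s = (∫ x, qT k p₀ w x * ‖s x‖^2)
      - 2*(∫ x, qT k p₀ w x * @inner ℝ _ _ (s x) (scoreQT k p₀ w x))
      + ∫ x, qT k p₀ w x * ‖scoreQT k p₀ w x‖^2 := by
    rw [Ltarget]
    have e : ∀ x, qT k p₀ w x * ‖s x - scoreQT k p₀ w x‖^2
        = (qT k p₀ w x * ‖s x‖^2
          - 2*(qT k p₀ w x * @inner ℝ _ _ (s x) (scoreQT k p₀ w x)))
          + qT k p₀ w x * ‖scoreQT k p₀ w x‖^2 := by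
      intro x; rw [norm_sub_sq_real]; ring
    simp_rw [e]
    have j2 : Integrable (fun x => 2 * (qT k p₀ w x
        * @inner ℝ _ _ (s x) (scoreQT k p₀ w x))) volume := hB_int.const_mul 2
    have j1 : Integrable (fun x => qT k p₀ w x * ‖s x‖^2
        - 2 * (qT k p₀ w x * @inner ℝ _ _ (s x) (scoreQT k p₀ w x))) volume := hs_int.sub j2
    rw [integral_add j1 hC₁, integral_sub hs_int j2, integral_const_mul]
  -- integrability of the second moment of gradLogK
  have hg_int : Integrable (fun x => ∫ x₀, q0 p₀ w x₀ * k x x₀ * ‖gradLogK k x x₀‖^2) :=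
    hC₂.integral_prod_left
  -- a.e. computation of the inner integral of Lsource
  have hsrc_ae : (fun x => ∫ x₀, p₀ x₀ * k x x₀ * (w x₀ / Wconst p₀ w)
        * ‖s x - gradLogK k x x₀‖^2)
      =ᵐ[volume] fun x => (qT k p₀ w x * ‖s x‖^2
        - 2*(qT k p₀ w x * @inner ℝ _ _ (s x) (scoreQT k p₀ w x)))
        + ∫ x₀, q0 p₀ w x₀ * k x x₀ * ‖gradLogK k x x₀‖^2 := by
    filter_upwards [Hkq.prod_right_ae, hC₂.prod_right_ae, hqt_ae] with x h1x h2x hx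
    simp only [Function.uncurry_apply_pair] at h1x h2x
    obtain ⟨hpos, hdiffq, hgradq⟩ := hx
    have hFval : ∀ x₀, q0 p₀ w x₀ • gradient (fun y => k y x₀) x
        = (k x x₀ * q0 p₀ w x₀) • gradLogK k x x₀ := by
      intro x₀
      rw [hgradk x x₀, smul_smul, mul_comm]
    have hF_meas : Measurable fun x₀ => q0 p₀ w x₀ • gradient (fun y => k y x₀) x :=
      hq0_meas.smul (measurable_gradient_param k hk_meas hk_diff x)
    have hF_int : Integrable fun x₀ => q0 p₀ w x₀ • gradient (fun y => k y x₀) x := by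
      refine Integrable.mono' ((h1x.add h2x).div_const 2) hF_meas.aestronglyMeasurable
        (Eventually.of_forall fun x₀ => ?_)
      rw [hFval x₀, norm_smul]
      have hk0 : 0 ≤ k x x₀ := (hk_pos x x₀).le
      have hq00 : 0 ≤ q0 p₀ w x₀ := hq0_nonneg x₀
      rw [Real.norm_eq_abs, abs_of_nonneg (mul_nonneg hk0 hq00)]
      simp only [Pi.add_apply, Pi.div_apply]
      nlinarith [mul_nonneg (mul_nonneg hk0 hq00) (sq_nonneg (1 - ‖gradLogK k x x₀‖)),
        norm_nonneg (gradLogK k x x₀), mul_nonneg hk0 hq00]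
    have hscore_x : scoreQT k p₀ w x = (qT k p₀ w x)⁻¹ • gradient (qT k p₀ w) x := by
      rw [scoreQT]
      exact gradient_log_comp _ _ hdiffq hpos.ne'
    have e1 : ∀ x₀, (k x x₀ * q0 p₀ w x₀) * @inner ℝ _ _ (s x) (gradLogK k x x₀)
        = @inner ℝ _ _ (s x) (q0 p₀ w x₀ • gradient (fun y => k y x₀) x) := by
      intro x₀
      rw [hFval x₀, real_inner_smul_right]
    have hcross : (∫ x₀, (k x x₀ * q0 p₀ w x₀) * @inner ℝ _ _ (s x) (gradLogK k x x₀))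
        = qT k p₀ w x * @inner ℝ _ _ (s x) (scoreQT k p₀ w x) := by
      simp_rw [e1]
      rw [integral_inner hF_int, ← hgradq, hscore_x, real_inner_smul_right]
      field_simp
    have e2 : ∀ x₀, p₀ x₀ * k x x₀ * (w x₀ / Wconst p₀ w) * ‖s x - gradLogK k x x₀‖^2
        = ((k x x₀ * q0 p₀ w x₀) * ‖s x‖^2
          - 2*((k x x₀ * q0 p₀ w x₀) * @inner ℝ _ _ (s x) (gradLogK k x x₀)))
          + q0 p₀ w x₀ * k x x₀ * ‖gradLogK k x x₀‖^2 := by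
      intro x₀
      rw [norm_sub_sq_real]
      simp only [q0]
      ring
    simp_rw [e2]
    have i1 : Integrable fun x₀ => (k x x₀ * q0 p₀ w x₀) * ‖s x‖^2 := h1x.mul_const _
    have i2 : Integrable fun x₀ =>
        (k x x₀ * q0 p₀ w x₀) * @inner ℝ _ _ (s x) (gradLogK k x x₀) := by
      refine (hF_int.const_inner (s x)).congr (Eventually.of_forall fun x₀ => ?_)
      exact (e1 x₀).symm
    have j2 : Integrable (fun x₀ => 2 * ((k x x₀ * q0 p₀ w x₀)
        * @inner ℝ _ _ (s x) (gradLogK k x x₀))) volume := i2.const_mul 2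
    have j1 : Integrable (fun x₀ => (k x x₀ * q0 p₀ w x₀) * ‖s x‖^2
        - 2 * ((k x x₀ * q0 p₀ w x₀) * @inner ℝ _ _ (s x) (gradLogK k x x₀))) volume := i1.sub j2
    have h2x' : Integrable (fun x₀ => q0 p₀ w x₀ * k x x₀ * ‖gradLogK k x x₀‖^2) volume := h2x
    rw [integral_add j1 h2x', integral_sub i1 j2, integral_const_mul,
      integral_mul_const, hcross]
    rfl
  -- expansion of Lsource
  have hLs : Lsource k p₀ w s = (∫ x, qT k p₀ w x * ‖s x‖^2)
      - 2*(∫ x, qT k p₀ w x * @inner ℝ _ _ (s x) (scoreQT k p₀ w x))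
      + ∫ x, ∫ x₀, q0 p₀ w x₀ * k x x₀ * ‖gradLogK k x x₀‖^2 := by
    have j2 : Integrable (fun x => 2 * (qT k p₀ w x
        * @inner ℝ _ _ (s x) (scoreQT k p₀ w x))) volume := hB_int.const_mul 2
    have j1 : Integrable (fun x => qT k p₀ w x * ‖s x‖^2
        - 2 * (qT k p₀ w x * @inner ℝ _ _ (s x) (scoreQT k p₀ w x))) volume := hs_int.sub j2
    rw [Lsource, integral_congr_ae hsrc_ae,
      integral_add j1 hg_int, integral_sub hs_int j2, integral_const_mul]
  rw [hLt, hLs]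
  ring

end
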